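/- There exists a constant A > 1 such that for all n ≥ 1: A^{−1}·φ^{−2n} ≤ P(b_n = 1) ≤ A·φ^{−2n}, and for every integer j > 1, P(b_n ≤ j) ≤ A·C(n+j−1, j−1)·φ^{−2n}, where φ = (√5 + 1)/2 and C(·,·) denotes the binomial coefficient. -/

import Mathlib

open MeasureTheory Set

/-- The Engel continued fraction map, with the convention `T_E 0 = 0`. -/
noncomputable def ecfT (x : ℝ) : ℝ :=
  if x = 0 then 0 else (1 / (⌊1 / x⌋ : ℝ)) * (1 / x - (⌊1 / x⌋ : ℝ))

/-- The `n`-th partial quotient of the ECF expansion (`n ≥ 1`). -/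
noncomputable def ecfB (n : ℕ) (x : ℝ) : ℤ := ⌊1 / (ecfT^[n - 1] x)⌋

/-- Lebesgue measure on `(0,1]`. -/
noncomputable def ecfP : Measure ℝ := volume.restrict (Set.Ioc 0 1)

namespace ECFAux

noncomputable def phi : ℝ := (Real.sqrt 5 + 1) / 2

lemma sqrt5_sq : Real.sqrt 5 ^ 2 = 5 := Real.sq_sqrt (by norm_num)

lemma sqrt5_bds : 2 < Real.sqrt 5 ∧ Real.sqrt 5 < 3 := by
  constructor
  · nlinarith [sqrt5_sq, Real.sqrt_nonneg 5]
  · nlinarith [sqrt5_sq, Real.sqrt_nonneg 5]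

lemma one_lt_phi : 1 < phi := by unfold phi; nlinarith [sqrt5_bds.1]
lemma phi_pos : 0 < phi := lt_trans one_pos one_lt_phi
lemma phi_lt_two : phi < 2 := by unfold phi; nlinarith [sqrt5_bds.2]
lemma phi_sq : phi ^ 2 = phi + 1 := by unfold phi; nlinarith [sqrt5_sq]

def Mc (c : ℕ) : Matrix (Fin 2) (Fin 2) ℤ := !![0, 1; (c : ℤ), (c : ℤ)]

def mat (l : List ℕ) : Matrix (Fin 2) (Fin 2) ℤ := (l.map Mc).prod

lemma mat_nil : mat [] = 1 := rfl

lemma mat_cons (c : ℕ) (l : List ℕ) : mat (c :: l) = Mc c * mat l := by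
  simp [mat]

lemma mat_append (l : List ℕ) (c : ℕ) : mat (l ++ [c]) = mat l * Mc c := by
  simp [mat]

-- entries
lemma mat_nil_e : mat [] 0 0 = 1 ∧ mat [] 0 1 = 0 ∧ mat [] 1 0 = 0 ∧ mat [] 1 1 = 1 := by
  refine ⟨?_, ?_, ?_, ?_⟩ <;> simp [mat_nil, Matrix.one_apply]

lemma mat_cons_e (c : ℕ) (l : List ℕ) :
    mat (c :: l) 0 0 = mat l 1 0 ∧ mat (c :: l) 0 1 = mat l 1 1 ∧
    mat (c :: l) 1 0 = c * (mat l 0 0 + mat l 1 0) ∧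
    mat (c :: l) 1 1 = c * (mat l 0 1 + mat l 1 1) := by
  refine ⟨?_, ?_, ?_, ?_⟩ <;>
    simp [mat_cons, Mc, Matrix.mul_apply, Fin.sum_univ_two] <;> ring

lemma mat_append_e (l : List ℕ) (c : ℕ) :
    mat (l ++ [c]) 0 0 = c * mat l 0 1 ∧
    mat (l ++ [c]) 0 1 = mat l 0 0 + c * mat l 0 1 ∧
    mat (l ++ [c]) 1 0 = c * mat l 1 1 ∧
    mat (l ++ [c]) 1 1 = mat l 1 0 + c * mat l 1 1 := by
  refine ⟨?_, ?_, ?_, ?_⟩ <;>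
    simp [mat_append, Mc, Matrix.mul_apply, Fin.sum_univ_two] <;> ring

lemma mat_pos (l : List ℕ) (h1 : ∀ c ∈ l, 1 ≤ c) :
    0 ≤ mat l 0 0 ∧ 0 ≤ mat l 0 1 ∧ 0 ≤ mat l 1 0 ∧ 1 ≤ mat l 1 1 ∧
      1 ≤ mat l 0 1 + mat l 1 1 := by
  induction l with
  | nil => simp [mat_nil, Matrix.one_apply]
  | cons c l ih =>
    obtain ⟨hA, hB, hC, hD, hBD⟩ := ih (fun d hd => h1 d (List.mem_cons_of_mem c hd))
    obtain ⟨e1, e2, e3, e4⟩ := mat_cons_e c l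
    have hc : (1 : ℤ) ≤ (c : ℤ) := by exact_mod_cast h1 c List.mem_cons_self
    rw [e1, e2, e3, e4]
    refine ⟨hC, by linarith, by positivity, ?_, ?_⟩ <;> nlinarith

lemma mat_det (l : List ℕ) :
    mat l 0 0 * mat l 1 1 - mat l 0 1 * mat l 1 0 = (-1) ^ l.length * (l.prod : ℤ) := by
  induction l with
  | nil => simp [mat_nil, Matrix.one_apply]
  | cons c l ih =>
    obtain ⟨e1, e2, e3, e4⟩ := mat_cons_e c l
    rw [e1, e2, e3, e4, List.length_cons, List.prod_cons, Nat.cast_mul]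
    ring_nf
    ring_nf at ih
    nlinarith [ih]

lemma aux_ineq {x : ℝ} (hx : 1 ≤ x) : phi ^ 2 * Real.sqrt x ≤ 1 + x * phi := by
  set s := Real.sqrt x with hs
  have hs2 : s ^ 2 = x := Real.sq_sqrt (by linarith)
  have hs1 : 1 ≤ s := by nlinarith [Real.sqrt_nonneg x]
  have key : 0 ≤ (s - 1) * (s - (phi - 1)) := by
    apply mul_nonneg <;> nlinarith [one_lt_phi, phi_lt_two]
  nlinarith [phi_sq, phi_pos]

lemma prod_pos (l : List ℕ) (h1 : ∀ c ∈ l, 1 ≤ c) : 1 ≤ l.prod := by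
  induction l with
  | nil => simp
  | cons c l ih =>
    rw [List.prod_cons]
    exact Nat.one_le_iff_ne_zero.2 (Nat.mul_ne_zero
      (Nat.one_le_iff_ne_zero.1 (h1 c List.mem_cons_self))
      (Nat.one_le_iff_ne_zero.1 (ih fun d hd => h1 d (List.mem_cons_of_mem c hd))))

lemma key_bound (l : List ℕ) (hne : l ≠ []) (h1 : ∀ c ∈ l, 1 ≤ c) :
    phi ^ (l.length - 1) * Real.sqrt (l.prod : ℝ) ≤ (mat l 1 1 : ℝ) ∧
    phi ^ (l.length - 1) * Real.sqrt (l.prod : ℝ) ≤ phi * (mat l 1 0 : ℝ) := by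
  induction l using List.reverseRecOn with
  | nil => exact absurd rfl hne
  | append_singleton l c ih =>
    obtain ⟨e1, e2, e3, e4⟩ := mat_append_e l c
    have hc : (1 : ℝ) ≤ (c : ℝ) := by exact_mod_cast h1 c (by simp)
    have hsc : Real.sqrt (c : ℝ) ≤ (c : ℝ) := by
      nlinarith [Real.sq_sqrt (by linarith : (0:ℝ) ≤ (c:ℝ)), Real.sqrt_nonneg (c:ℝ),
        Real.sqrt_le_sqrt hc, Real.sqrt_one]
    have hsc0 : 0 ≤ Real.sqrt (c : ℝ) := Real.sqrt_nonneg _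
    rcases eq_or_ne l [] with rfl | hl
    · simp only [List.nil_append] at e1 e2 e3 e4 ⊢
      obtain ⟨f1, f2, f3, f4⟩ := mat_nil_e
      rw [e3, e4, f3, f4]
      simp only [List.length_singleton, List.prod_singleton]
      norm_num
      constructor
      · push_cast; right; exact_mod_cast hc
      · push_cast; nlinarith [phi_pos, one_lt_phi]
    · obtain ⟨ihD, ihC⟩ := ih hl (fun d hd => h1 d (by simp [hd]))
      set n := l.length with hn
      have hn1 : 1 ≤ n := List.length_pos_iff.2 hl
      have hlen : (l ++ [c]).length - 1 = n := by simp [hn]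
      have hprod : ((l ++ [c]).prod : ℝ) = (l.prod : ℝ) * (c : ℝ) := by
        rw [List.prod_append]; push_cast; simp
      have hP0 : (0:ℝ) ≤ (l.prod : ℝ) := by positivity
      have hsqrt : Real.sqrt ((l.prod : ℝ) * (c:ℝ)) =
          Real.sqrt (l.prod : ℝ) * Real.sqrt (c : ℝ) := Real.sqrt_mul hP0 _
      have hD0 : (0:ℝ) ≤ (mat l 1 1 : ℝ) := by
        have := (mat_pos l (fun d hd => h1 d (by simp [hd]))).2.2.2.1
        exact_mod_cast le_trans zero_le_one (by exact_mod_cast this)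
      have hC0 : (0:ℝ) ≤ (mat l 1 0 : ℝ) := by
        exact_mod_cast (mat_pos l (fun d hd => h1 d (by simp [hd]))).2.2.1
      have hphipow : phi ^ (n - 1) * phi = phi ^ n := by
        rw [← pow_succ]; congr 1; omega
      rw [hlen, hprod, hsqrt, e3, e4]
      have hsP : 0 ≤ Real.sqrt (l.prod : ℝ) := Real.sqrt_nonneg _
      have hphin : (0:ℝ) < phi ^ n := pow_pos phi_pos n
      have cast1 : ((mat l 1 0 + (c:ℤ) * mat l 1 1 : ℤ) : ℝ)
          = (mat l 1 0 : ℝ) + (c:ℝ) * (mat l 1 1 : ℝ) := by push_cast; ring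
      have cast2 : (((c:ℤ) * mat l 1 1 : ℤ) : ℝ) = (c:ℝ) * (mat l 1 1 : ℝ) := by
        push_cast; ring
      rw [cast1, cast2]
      constructor
      · -- φ^n √Π √c ≤ C + c D ; multiply by φ
        rw [← mul_le_mul_iff_right₀ phi_pos]
        have key := aux_ineq hc
        -- φ * (φ^n √Π √c) = φ^{n-1} √Π * (φ^2 √c)
        have h2 : phi * (phi ^ n * (Real.sqrt (l.prod:ℝ) * Real.sqrt (c:ℝ)))
            = phi ^ (n-1) * Real.sqrt (l.prod:ℝ) * (phi ^ 2 * Real.sqrt (c:ℝ)) := by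
          rw [← hphipow]; ring
        have h3 : phi ^ (n-1) * Real.sqrt (l.prod:ℝ) * (phi ^ 2 * Real.sqrt (c:ℝ))
            ≤ phi ^ (n-1) * Real.sqrt (l.prod:ℝ) * (1 + (c:ℝ) * phi) := by
          apply mul_le_mul_of_nonneg_left key
            (mul_nonneg (le_of_lt (pow_pos phi_pos _)) hsP)
        rw [h2]
        refine le_trans h3 ?_
        have : phi ^ (n-1) * Real.sqrt (l.prod:ℝ) * (1 + (c:ℝ) * phi)
            = phi ^ (n-1) * Real.sqrt (l.prod:ℝ)
              + (c:ℝ) * (phi * (phi ^ (n-1) * Real.sqrt (l.prod:ℝ))) := by ring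
        rw [this]
        have h4 : phi * (phi ^ (n-1) * Real.sqrt (l.prod:ℝ)) ≤ phi * (mat l 1 1 : ℝ) :=
          mul_le_mul_of_nonneg_left ihD (le_of_lt phi_pos)
        have h5 : (c:ℝ) * (phi * (phi ^ (n-1) * Real.sqrt (l.prod:ℝ)))
            ≤ (c:ℝ) * (phi * (mat l 1 1 : ℝ)) :=
          mul_le_mul_of_nonneg_left h4 (by linarith)
        calc phi ^ (n-1) * Real.sqrt (l.prod:ℝ)
              + (c:ℝ) * (phi * (phi ^ (n-1) * Real.sqrt (l.prod:ℝ)))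
            ≤ phi * (mat l 1 0 : ℝ) + (c:ℝ) * (phi * (mat l 1 1 : ℝ)) := by
              exact add_le_add ihC h5
          _ = phi * ((mat l 1 0 : ℝ) + (c:ℝ) * (mat l 1 1 : ℝ)) := by ring
      · -- φ^n √Π √c ≤ φ * (c * D)
        have h6 : phi ^ n * (Real.sqrt (l.prod:ℝ) * Real.sqrt (c:ℝ))
            ≤ phi ^ n * (Real.sqrt (l.prod:ℝ) * (c:ℝ)) := by
          apply mul_le_mul_of_nonneg_left _ (le_of_lt hphin)
          exact mul_le_mul_of_nonneg_left hsc hsP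
        refine le_trans h6 ?_
        have h7 : phi ^ n * (Real.sqrt (l.prod:ℝ) * (c:ℝ))
            = (c:ℝ) * (phi * (phi ^ (n-1) * Real.sqrt (l.prod:ℝ))) := by
          rw [← hphipow]; ring
        rw [h7]
        have h8 : (c:ℝ) * (phi * (phi ^ (n-1) * Real.sqrt (l.prod:ℝ)))
            ≤ (c:ℝ) * (phi * (mat l 1 1 : ℝ)) :=
          mul_le_mul_of_nonneg_left (mul_le_mul_of_nonneg_left ihD (le_of_lt phi_pos))
            (by linarith)
        linarith

noncomputable def psi (l : List ℕ) (t : ℝ) : ℝ :=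
  ((mat l 0 0 : ℝ) * t + (mat l 0 1 : ℝ)) / ((mat l 1 0 : ℝ) * t + (mat l 1 1 : ℝ))

lemma den_pos (l : List ℕ) (h1 : ∀ c ∈ l, 1 ≤ c) {t : ℝ} (ht : 0 ≤ t) :
    0 < (mat l 1 0 : ℝ) * t + (mat l 1 1 : ℝ) := by
  obtain ⟨hA, hB, hC, hD, -⟩ := mat_pos l h1
  have : (0:ℝ) ≤ (mat l 1 0 : ℝ) := by exact_mod_cast hC
  have : (1:ℝ) ≤ (mat l 1 1 : ℝ) := by exact_mod_cast hD
  nlinarith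

lemma psi_nil (t : ℝ) : psi [] t = t := by
  obtain ⟨f1, f2, f3, f4⟩ := mat_nil_e
  simp [psi, f1, f2, f3, f4]

lemma psi_nonneg (l : List ℕ) (h1 : ∀ c ∈ l, 1 ≤ c) {t : ℝ} (ht : 0 ≤ t) :
    0 ≤ psi l t := by
  obtain ⟨hA, hB, hC, hD, -⟩ := mat_pos l h1
  have hA' : (0:ℝ) ≤ (mat l 0 0 : ℝ) := by exact_mod_cast hA
  have hB' : (0:ℝ) ≤ (mat l 0 1 : ℝ) := by exact_mod_cast hB
  exact div_nonneg (by nlinarith) (le_of_lt (den_pos l h1 ht))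

lemma psi_cons (c : ℕ) (l : List ℕ) (hc : 1 ≤ c) (h1 : ∀ d ∈ l, 1 ≤ d) {t : ℝ}
    (ht : 0 ≤ t) : psi (c :: l) t = ((c : ℝ) * (psi l t + 1))⁻¹ := by
  obtain ⟨e1, e2, e3, e4⟩ := mat_cons_e c l
  obtain ⟨hA, hB, hC, hD, -⟩ := mat_pos l h1
  have hA' : (0:ℝ) ≤ (mat l 0 0 : ℝ) := by exact_mod_cast hA
  have hB' : (0:ℝ) ≤ (mat l 0 1 : ℝ) := by exact_mod_cast hB
  have hC' : (0:ℝ) ≤ (mat l 1 0 : ℝ) := by exact_mod_cast hC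
  have hD' : (1:ℝ) ≤ (mat l 1 1 : ℝ) := by exact_mod_cast hD
  have hden : 0 < (mat l 1 0 : ℝ) * t + (mat l 1 1 : ℝ) := den_pos l h1 ht
  have hc' : (0:ℝ) < (c : ℝ) := by exact_mod_cast lt_of_lt_of_le zero_lt_one hc
  have hpsi : 0 ≤ psi l t := psi_nonneg l h1 ht
  have h2 : (0:ℝ) < (c : ℝ) * (psi l t + 1) := by nlinarith
  rw [psi, psi, e1, e2, e3, e4] at *
  push_cast
  have hden2 : (0:ℝ) < (c:ℝ) * ((mat l 0 0 : ℝ) + (mat l 1 0 : ℝ)) * t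
      + (c:ℝ) * ((mat l 0 1 : ℝ) + (mat l 1 1 : ℝ)) := by
    nlinarith [mul_nonneg (mul_nonneg hc'.le (add_nonneg hA' hC')) ht,
      mul_pos hc' (show (0:ℝ) < (mat l 0 1 : ℝ) + (mat l 1 1 : ℝ) by linarith)]
  rw [inv_eq_one_div, div_eq_div_iff (ne_of_gt hden2) (ne_of_gt h2)]
  field_simp
  ring

lemma mat_det_real (l : List ℕ) :
    (mat l 0 0 : ℝ) * (mat l 1 1 : ℝ) - (mat l 0 1 : ℝ) * (mat l 1 0 : ℝ)
      = (-1) ^ l.length * (l.prod : ℝ) := by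
  have hdet : ((mat l 0 0 * mat l 1 1 - mat l 0 1 * mat l 1 0 : ℤ) : ℝ)
      = ((((-1) ^ l.length * (l.prod : ℤ)) : ℤ) : ℝ) := by rw [mat_det l]
  simp only [Int.cast_mul, Int.cast_sub, Int.cast_pow, Int.cast_neg, Int.cast_one,
    Int.cast_natCast] at hdet
  linarith

lemma psi_diff (l : List ℕ) (h1 : ∀ c ∈ l, 1 ≤ c) {t s : ℝ} (ht : 0 ≤ t) (hs : 0 ≤ s) :
    psi l t - psi l s = ((-1) ^ l.length * (l.prod : ℝ)) * (t - s) /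
      (((mat l 1 0 : ℝ) * t + (mat l 1 1 : ℝ)) * ((mat l 1 0 : ℝ) * s + (mat l 1 1 : ℝ))) := by
  have hdt := den_pos l h1 ht
  have hds := den_pos l h1 hs
  have hdet := mat_det_real l
  rw [psi, psi, div_sub_div _ _ (ne_of_gt hdt) (ne_of_gt hds)]
  congr 1
  linear_combination (t - s) * hdet

lemma psi_diff_bound (l : List ℕ) (hne : l ≠ []) (h1 : ∀ c ∈ l, 1 ≤ c) {t s : ℝ}
    (ht : t ∈ Icc (0:ℝ) 1) (hs : s ∈ Icc (0:ℝ) 1) :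
    |psi l t - psi l s| ≤ phi ^ 2 * (phi ^ (2 * l.length))⁻¹ := by
  obtain ⟨hA, hB, hC, hD, -⟩ := mat_pos l h1
  have hC' : (0:ℝ) ≤ (mat l 1 0 : ℝ) := by exact_mod_cast hC
  have hD' : (1:ℝ) ≤ (mat l 1 1 : ℝ) := by exact_mod_cast hD
  have hdt := den_pos l h1 ht.1
  have hds := den_pos l h1 hs.1
  have hn1 : 1 ≤ l.length := List.length_pos_iff.2 hne
  have hP0' : (1:ℝ) ≤ (l.prod : ℝ) := by exact_mod_cast prod_pos l h1
  have hDsq : phi ^ (2 * l.length - 2) * (l.prod : ℝ) ≤ (mat l 1 1 : ℝ) ^ 2 := by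
    have hk := (key_bound l hne h1).1
    have h0 : 0 ≤ phi ^ (l.length - 1) * Real.sqrt (l.prod : ℝ) :=
      mul_nonneg (le_of_lt (pow_pos phi_pos _)) (Real.sqrt_nonneg _)
    have hmm := mul_self_le_mul_self h0 hk
    have heq : (phi ^ (l.length - 1) * Real.sqrt (l.prod : ℝ))
        * (phi ^ (l.length - 1) * Real.sqrt (l.prod : ℝ))
        = phi ^ (2 * l.length - 2) * (l.prod : ℝ) := by
      have hss : Real.sqrt (l.prod : ℝ) * Real.sqrt (l.prod : ℝ) = (l.prod : ℝ) :=
        Real.mul_self_sqrt (by linarith)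
      calc phi ^ (l.length - 1) * Real.sqrt (l.prod : ℝ)
            * (phi ^ (l.length - 1) * Real.sqrt (l.prod : ℝ))
          = phi ^ (l.length - 1) * phi ^ (l.length - 1)
            * (Real.sqrt (l.prod : ℝ) * Real.sqrt (l.prod : ℝ)) := by ring
        _ = phi ^ (2 * l.length - 2) * (l.prod : ℝ) := by
            rw [hss, ← pow_add]; congr 2; omega
    calc phi ^ (2 * l.length - 2) * (l.prod : ℝ) = _ := heq.symm
      _ ≤ (mat l 1 1 : ℝ) * (mat l 1 1 : ℝ) := hmm
      _ = (mat l 1 1 : ℝ) ^ 2 := by ring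
  rw [psi_diff l h1 ht.1 hs.1, abs_div]
  have hnum : |((-1) ^ l.length * (l.prod : ℝ)) * (t - s)| ≤ (l.prod : ℝ) := by
    rw [abs_mul, abs_mul, abs_pow, abs_neg, abs_one, one_pow, one_mul,
      abs_of_nonneg (by linarith : (0:ℝ) ≤ (l.prod : ℝ))]
    have hts : |t - s| ≤ 1 := abs_le.2 ⟨by linarith [ht.1, ht.2, hs.1, hs.2],
      by linarith [ht.1, ht.2, hs.1, hs.2]⟩
    nlinarith [mul_le_mul_of_nonneg_left hts (show (0:ℝ) ≤ (l.prod : ℝ) by linarith),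
      abs_nonneg (t - s)]
  have habs : |((mat l 1 0 : ℝ) * t + (mat l 1 1 : ℝ))
      * ((mat l 1 0 : ℝ) * s + (mat l 1 1 : ℝ))|
      = ((mat l 1 0 : ℝ) * t + (mat l 1 1 : ℝ))
      * ((mat l 1 0 : ℝ) * s + (mat l 1 1 : ℝ)) :=
    abs_of_pos (mul_pos hdt hds)
  rw [habs]
  have hdenlb : phi ^ (2 * l.length - 2) * (l.prod : ℝ)
      ≤ ((mat l 1 0 : ℝ) * t + (mat l 1 1 : ℝ))
        * ((mat l 1 0 : ℝ) * s + (mat l 1 1 : ℝ)) := by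
    have h1t : (mat l 1 1 : ℝ) ≤ (mat l 1 0 : ℝ) * t + (mat l 1 1 : ℝ) := by
      nlinarith [mul_nonneg hC' ht.1]
    have h1s : (mat l 1 1 : ℝ) ≤ (mat l 1 0 : ℝ) * s + (mat l 1 1 : ℝ) := by
      nlinarith [mul_nonneg hC' hs.1]
    nlinarith [mul_le_mul h1t h1s (by linarith) (by linarith :
      (0:ℝ) ≤ (mat l 1 0 : ℝ) * t + (mat l 1 1 : ℝ))]
  have hdlbpos : (0:ℝ) < phi ^ (2 * l.length - 2) * (l.prod : ℝ) := by
    have := pow_pos phi_pos (2 * l.length - 2); nlinarith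
  calc |((-1) ^ l.length * (l.prod : ℝ)) * (t - s)|
        / (((mat l 1 0 : ℝ) * t + (mat l 1 1 : ℝ))
          * ((mat l 1 0 : ℝ) * s + (mat l 1 1 : ℝ)))
      ≤ (l.prod : ℝ) / (phi ^ (2 * l.length - 2) * (l.prod : ℝ)) :=
        div_le_div₀ (by linarith) hnum hdlbpos hdenlb
    _ = phi ^ 2 * (phi ^ (2 * l.length))⁻¹ := by
        have hsplit : phi ^ (2 * l.length) = phi ^ (2 * l.length - 2) * phi ^ 2 := by
          rw [← pow_add]; congr 1; omega
        have h1' : phi ^ (2 * l.length - 2) ≠ 0 := ne_of_gt (pow_pos phi_pos _)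
        have h2' : (l.prod : ℝ) ≠ 0 := by linarith
        have h3' : phi ^ 2 * (phi ^ (2 * l.length - 2) * phi ^ 2)⁻¹
            = (phi ^ (2 * l.length - 2))⁻¹ := by
          rw [mul_inv, mul_comm ((phi ^ (2 * l.length - 2))⁻¹) ((phi ^ 2)⁻¹), ← mul_assoc,
            mul_inv_cancel₀ (pow_ne_zero 2 (ne_of_gt phi_pos)), one_mul]
        rw [hsplit, h3', mul_comm (phi ^ (2 * l.length - 2)) ((l.prod : ℝ)),
          div_mul_eq_div_div, div_self h2', one_div]

-- basic dynamics
lemma floor_pos_of_mem {x : ℝ} (hx : x ∈ Ioc (0:ℝ) 1) : 1 ≤ ⌊1 / x⌋ := by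
  rw [Int.le_floor]
  rw [le_div_iff₀ hx.1]
  simpa using hx.2

lemma ecfT_basic {x : ℝ} (hx : x ∈ Ioc (0:ℝ) 1) :
    0 ≤ ecfT x ∧ ecfT x < 1 / (⌊1 / x⌋ : ℝ) ∧
      x = ((⌊1 / x⌋ : ℝ) * (ecfT x + 1))⁻¹ := by
  have hx0 : x ≠ 0 := ne_of_gt hx.1
  have hb := floor_pos_of_mem hx
  have hb' : (1:ℝ) ≤ (⌊1 / x⌋ : ℝ) := by exact_mod_cast hb
  have hbpos : (0:ℝ) < (⌊1 / x⌋ : ℝ) := by linarith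
  have hT : ecfT x = (1 / (⌊1 / x⌋ : ℝ)) * (1 / x - (⌊1 / x⌋ : ℝ)) := by
    rw [ecfT, if_neg hx0]
  have hfr0 : 0 ≤ 1 / x - (⌊1 / x⌋ : ℝ) := by
    have := Int.floor_le (1 / x); linarith
  have hfr1 : 1 / x - (⌊1 / x⌋ : ℝ) < 1 := by
    have := Int.lt_floor_add_one (1 / x); linarith
  refine ⟨by rw [hT]; positivity, ?_, ?_⟩
  · rw [hT]
    have h1b : 0 < 1 / (⌊1 / x⌋ : ℝ) := by positivity
    nlinarith [mul_lt_mul_of_pos_left hfr1 h1b]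
  · have hxpos := hx.1
    have hkey : (⌊1 / x⌋ : ℝ) * (ecfT x + 1) = 1 / x := by
      rw [hT]; field_simp; ring
    rw [hkey, one_div, inv_inv]

lemma ecfB_one (x : ℝ) : ecfB 1 x = ⌊1 / x⌋ := by simp [ecfB]

lemma ecfB_shift (k : ℕ) (hk : 1 ≤ k) (x : ℝ) : ecfB (k + 1) x = ecfB k (ecfT x) := by
  have h1 : (k + 1) - 1 = (k - 1) + 1 := by omega
  rw [ecfB, ecfB, h1, Function.iterate_succ_apply]

lemma ecfB_zero_of_zero : ecfB 1 (0:ℝ) = 0 := by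
  rw [ecfB_one]; norm_num

/-- Points in `(0,1]` whose digit pattern matches `l` are in the image of `psi l`. -/
lemma cyl_mem_psi (l : List ℕ) (h1 : ∀ c ∈ l, 1 ≤ c) :
    ∀ x : ℝ, 0 ≤ x → x ≤ 1 →
      (∀ i : Fin l.length, ecfB (i + 1) x = (l.get i : ℤ)) →
      ∃ t ∈ Icc (0:ℝ) 1, x = psi l t := by
  induction l with
  | nil => intro x hx0 hx1 _; exact ⟨x, ⟨hx0, hx1⟩, (psi_nil x).symm⟩
  | cons c l ih =>
    intro x hx0 hx1 hdig
    have hc : 1 ≤ c := h1 c List.mem_cons_self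
    have hd0 : ecfB 1 x = (c : ℤ) := by
      have := hdig ⟨0, by simp⟩
      simpa using this
    have hxne : x ≠ 0 := by
      intro h
      rw [h, ecfB_zero_of_zero] at hd0
      exact absurd hd0.symm (by exact_mod_cast Nat.one_le_iff_ne_zero.1 hc)
    have hxmem : x ∈ Ioc (0:ℝ) 1 := ⟨lt_of_le_of_ne hx0 (Ne.symm hxne), hx1⟩
    obtain ⟨hT0, hT1, hxeq⟩ := ecfT_basic hxmem
    have hfl : ⌊1 / x⌋ = (c : ℤ) := by rw [← ecfB_one]; exact hd0
    have hb' : (⌊1 / x⌋ : ℝ) = (c : ℝ) := by rw [hfl]; norm_cast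
    have hc' : (1:ℝ) ≤ (c : ℝ) := by exact_mod_cast hc
    have hT1' : ecfT x ≤ 1 := by
      have : (1:ℝ) / (c:ℝ) ≤ 1 := by
        rw [div_le_one (by linarith)]; linarith
      rw [hb'] at hT1; linarith
    have hdig' : ∀ i : Fin l.length, ecfB (i + 1) (ecfT x) = (l.get i : ℤ) := by
      intro i
      have := hdig ⟨i + 1, by simp⟩
      rw [ecfB_shift (i + 1) (by omega) x] at this
      simpa using this
    obtain ⟨t, htmem, hteq⟩ := ih (fun d hd => h1 d (List.mem_cons_of_mem c hd))
      (ecfT x) hT0 hT1' hdig'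
    refine ⟨t, htmem, ?_⟩
    rw [psi_cons c l hc (fun d hd => h1 d (List.mem_cons_of_mem c hd)) htmem.1, ← hteq]
    rw [hb'] at hxeq
    exact hxeq

/-- Forward dynamics for the all-ones cylinder. -/
lemma ones_forward (n : ℕ) {t : ℝ} (ht : t ∈ Ioo (0:ℝ) 1) :
    psi (List.replicate n 1) t ∈ Ioo (0:ℝ) 1 ∧
      ∀ i : Fin n, ecfB (i + 1) (psi (List.replicate n 1) t) = 1 := by
  induction n with
  | zero => rw [List.replicate_zero, psi_nil]; exact ⟨ht, fun i => i.elim0⟩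
  | succ n ih =>
    obtain ⟨hu, hdig⟩ := ih
    set u := psi (List.replicate n 1) t with hudef
    have h1s : ∀ d ∈ List.replicate n 1, 1 ≤ d := by
      intro d hd; rw [List.eq_of_mem_replicate hd]
    have hrep : List.replicate (n + 1) 1 = 1 :: List.replicate n 1 := rfl
    have hx : psi (List.replicate (n + 1) 1) t = ((1:ℝ) * (u + 1))⁻¹ := by
      rw [hrep, psi_cons 1 (List.replicate n 1) le_rfl h1s (le_of_lt ht.1)]
      norm_num
      exact hudef.symm
    have hxval : psi (List.replicate (n + 1) 1) t = (u + 1)⁻¹ := by rw [hx]; ring_nf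
    set x := psi (List.replicate (n + 1) 1) t with hxdef
    have hu0 : 0 < u := hu.1
    have hu1 : u < 1 := hu.2
    have hxmem : x ∈ Ioo (0:ℝ) 1 := by
      rw [hxval]
      constructor
      · positivity
      · rw [inv_lt_one_iff₀]; right; linarith
    have hinv : 1 / x = u + 1 := by
      rw [hxval, one_div, inv_inv]
    have hfloor : ⌊1 / x⌋ = 1 := by
      rw [hinv, Int.floor_eq_iff]
      push_cast
      constructor <;> linarith
    have hTx : ecfT x = u := by
      rw [ecfT, if_neg (ne_of_gt hxmem.1), hfloor, hinv]
      push_cast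
      ring
    refine ⟨hxmem, ?_⟩
    intro i
    refine Fin.cases ?_ ?_ i
    · simp only [Fin.val_zero, zero_add, ecfB_one]
      simpa using hfloor
    · intro j
      have : ((j.succ : ℕ) + 1) = ((j : ℕ) + 1) + 1 := by simp [Fin.val_succ]
      rw [this, ecfB_shift ((j : ℕ) + 1) (by omega) x, hTx]
      exact hdig j

lemma ecfT_maps {x : ℝ} (hx : x ∈ Ioc (0:ℝ) 1) : 0 ≤ ecfT x ∧ ecfT x < 1 := by
  obtain ⟨h0, h1, -⟩ := ecfT_basic hx
  have hb : (1:ℝ) ≤ (⌊1 / x⌋ : ℝ) := by exact_mod_cast floor_pos_of_mem hx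
  refine ⟨h0, lt_of_lt_of_le h1 ?_⟩
  rw [div_le_one (by linarith)]; linarith

lemma zero_level_countable (k : ℕ) :
    {x : ℝ | x ∈ Ioc (0:ℝ) 1 ∧ ecfT^[k] x = 0}.Countable := by
  induction k with
  | zero =>
    apply Set.Countable.mono _ (Set.countable_singleton (0:ℝ))
    rintro x ⟨hx, hx0⟩
    simp only [Function.iterate_zero, id] at hx0
    exact absurd hx0 (ne_of_gt hx.1)
  | succ k ih =>
    have hsub : {x : ℝ | x ∈ Ioc (0:ℝ) 1 ∧ ecfT^[k+1] x = 0} ⊆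
        ⋃ m : ℕ, (fun y : ℝ => (((m:ℝ) + 1) * (y + 1))⁻¹) ''
          (insert (0:ℝ) {y : ℝ | y ∈ Ioc (0:ℝ) 1 ∧ ecfT^[k] y = 0}) := by
      rintro x ⟨hx, hx0⟩
      rw [Function.iterate_succ_apply] at hx0
      obtain ⟨hT0, hT1⟩ := ecfT_maps hx
      obtain ⟨-, -, hxeq⟩ := ecfT_basic hx
      have hb := floor_pos_of_mem hx
      set m : ℕ := (⌊1 / x⌋ - 1).toNat with hm
      have hmb : ((m:ℝ) + 1) = (⌊1 / x⌋ : ℝ) := by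
        have : ((m:ℤ)) = ⌊1 / x⌋ - 1 := Int.toNat_of_nonneg (by omega)
        have h2 : ((m:ℝ)) = (⌊1 / x⌋ : ℝ) - 1 := by exact_mod_cast this
        linarith
      apply Set.mem_iUnion.2 ⟨m, ?_⟩
      refine ⟨ecfT x, ?_, ?_⟩
      · rcases eq_or_ne (ecfT x) 0 with h | h
        · rw [h]; exact Set.mem_insert _ _
        · exact Set.mem_insert_of_mem _
            ⟨⟨lt_of_le_of_ne hT0 (Ne.symm h), le_of_lt hT1⟩, hx0⟩
      · simp only
        rw [hmb, ← hxeq]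
    exact Set.Countable.mono hsub
      (Set.countable_iUnion fun m => (Set.Countable.insert _ ih).image _)

lemma bad_null (n : ℕ) :
    volume {x : ℝ | x ∈ Ioc (0:ℝ) 1 ∧ ∃ k < n, ecfT^[k] x = 0} = 0 := by
  have : {x : ℝ | x ∈ Ioc (0:ℝ) 1 ∧ ∃ k < n, ecfT^[k] x = 0} ⊆
      ⋃ k ∈ Finset.range n, {x : ℝ | x ∈ Ioc (0:ℝ) 1 ∧ ecfT^[k] x = 0} := by
    rintro x ⟨hx, k, hk, h0⟩
    exact Set.mem_biUnion (Finset.mem_range.2 hk) ⟨hx, h0⟩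
  refine measure_mono_null this (Set.Countable.measure_zero ?_ _)
  exact Set.Countable.biUnion (Set.to_countable _) (fun k _ => zero_level_countable k)

/-- Iterates of a "good" point stay in `(0,1]`. -/
lemma good_iter {x : ℝ} (hx : x ∈ Ioc (0:ℝ) 1) {n : ℕ}
    (hgood : ∀ k < n, ecfT^[k] x ≠ 0) :
    ∀ k < n, ecfT^[k] x ∈ Ioc (0:ℝ) 1 := by
  intro k hk
  induction k with
  | zero => simpa using hx
  | succ k ih =>
    have hmem := ih (by omega)
    rw [Function.iterate_succ_apply']
    obtain ⟨h0, h1⟩ := ecfT_maps hmem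
    have hne : ecfT^[k+1] x ≠ 0 := hgood (k+1) hk
    rw [Function.iterate_succ_apply'] at hne
    exact ⟨lt_of_le_of_ne h0 (Ne.symm hne), le_of_lt h1⟩

lemma good_digit_pos {x : ℝ} (hx : x ∈ Ioc (0:ℝ) 1) {n : ℕ}
    (hgood : ∀ k < n, ecfT^[k] x ≠ 0) :
    ∀ k < n, 1 ≤ ecfB (k + 1) x := by
  intro k hk
  rw [ecfB]
  simp only [Nat.add_sub_cancel]
  exact floor_pos_of_mem (good_iter hx hgood k hk)

lemma good_digit_mono {x : ℝ} (hx : x ∈ Ioc (0:ℝ) 1) {n : ℕ}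
    (hgood : ∀ k < n, ecfT^[k] x ≠ 0) :
    ∀ k, k + 1 < n → ecfB (k + 1) x ≤ ecfB (k + 2) x := by
  intro k hk
  have hmem := good_iter hx hgood k (by omega)
  have hmem' := good_iter hx hgood (k + 1) hk
  obtain ⟨h0, h1, -⟩ := ecfT_basic hmem
  rw [ecfB, ecfB]
  simp only [Nat.add_sub_cancel]
  have hTk : ecfT^[k+1] x = ecfT (ecfT^[k] x) := Function.iterate_succ_apply' _ _ _
  rw [show (k + 2) - 1 = k + 1 by omega, hTk]
  rw [Int.le_floor]
  have hpos : 0 < ecfT (ecfT^[k] x) := by rw [← hTk]; exact hmem'.1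
  have hfb : (0:ℝ) < (⌊1 / ecfT^[k] x⌋ : ℝ) := by
    exact_mod_cast lt_of_lt_of_le zero_lt_one (floor_pos_of_mem hmem)
  rw [le_div_iff₀ hpos]
  calc (⌊1 / ecfT^[k] x⌋ : ℝ) * ecfT (ecfT^[k] x)
      ≤ (⌊1 / ecfT^[k] x⌋ : ℝ) * (1 / (⌊1 / ecfT^[k] x⌋ : ℝ)) :=
        mul_le_mul_of_nonneg_left (le_of_lt h1) (le_of_lt hfb)
    _ = 1 := by field_simp

lemma good_digit_mono' {x : ℝ} (hx : x ∈ Ioc (0:ℝ) 1) {n : ℕ}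
    (hgood : ∀ k < n, ecfT^[k] x ≠ 0) :
    ∀ k k', k ≤ k' → k' < n → ecfB (k + 1) x ≤ ecfB (k' + 1) x := by
  intro k k' hkk' hk'
  induction k' with
  | zero =>
    have hk0 : k = 0 := Nat.le_zero.1 hkk'
    rw [hk0]
  | succ k' ih =>
    rcases Nat.eq_or_lt_of_le hkk' with rfl | hlt
    · exact le_rfl
    · exact le_trans (ih (by omega) (by omega))
        (good_digit_mono hx hgood k' (by omega))

/-- Entry upper bounds for the all-ones word. -/
lemma ones_upper (n : ℕ) :
    (mat (List.replicate n 1) 0 0 : ℝ) + (mat (List.replicate n 1) 0 1 : ℝ) ≤ phi ^ n ∧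
    (mat (List.replicate n 1) 1 0 : ℝ) + (mat (List.replicate n 1) 1 1 : ℝ) ≤ phi ^ (n + 1) := by
  induction n with
  | zero =>
    obtain ⟨f1, f2, f3, f4⟩ := mat_nil_e
    rw [List.replicate_zero, f1, f2, f3, f4]
    push_cast
    constructor
    · norm_num
    · rw [pow_one]; norm_num; linarith [one_lt_phi]
  | succ n ih =>
    obtain ⟨ih1, ih2⟩ := ih
    obtain ⟨e1, e2, e3, e4⟩ := mat_cons_e 1 (List.replicate n 1)
    have hrep : List.replicate (n + 1) 1 = 1 :: List.replicate n 1 := rfl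
    rw [hrep, e1, e2, e3, e4]
    push_cast
    have hphi2 : phi ^ (n + 1 + 1) = phi ^ n + phi ^ (n + 1) := by
      have h : phi ^ (n + 1 + 1) = phi ^ n * phi ^ 2 := by ring
      rw [h, phi_sq]; ring
    constructor
    · exact ih2
    · linarith [ih1, ih2, hphi2]

def cylSet (l : List ℕ) : Set ℝ :=
  {x : ℝ | x ∈ Ioc (0:ℝ) 1 ∧ ∀ i : Fin l.length, ecfB (i + 1) x = (l.get i : ℤ)}

lemma cyl_measure (l : List ℕ) (hne : l ≠ []) (h1 : ∀ c ∈ l, 1 ≤ c) :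
    volume (cylSet l) ≤ ENNReal.ofReal (2 * (phi ^ 2 * (phi ^ (2 * l.length))⁻¹)) := by
  set r := phi ^ 2 * (phi ^ (2 * l.length))⁻¹ with hr
  have hsub : cylSet l ⊆ Icc (psi l 0 - r) (psi l 0 + r) := by
    rintro x ⟨hx, hdig⟩
    obtain ⟨t, htmem, hteq⟩ := cyl_mem_psi l h1 x (le_of_lt hx.1) hx.2 hdig
    have hbd := psi_diff_bound l hne h1 htmem (Set.left_mem_Icc.2 zero_le_one)
    rw [← hteq] at hbd
    rw [abs_le] at hbd
    exact ⟨by linarith [hbd.1], by linarith [hbd.2]⟩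
  calc volume (cylSet l) ≤ volume (Icc (psi l 0 - r) (psi l 0 + r)) := measure_mono hsub
    _ = ENNReal.ofReal (2 * r) := by rw [Real.volume_Icc]; congr 1; ring

lemma ones_lower (n : ℕ) (hn : 1 ≤ n) :
    ENNReal.ofReal ((2 * phi ^ 2)⁻¹ * (phi ^ (2 * n))⁻¹) ≤
      volume {x : ℝ | x ∈ Ioc (0:ℝ) 1 ∧ ecfB n x = 1} := by
  set l := List.replicate n 1 with hl
  have h1s : ∀ d ∈ l, 1 ≤ d := fun d hd => by rw [List.eq_of_mem_replicate hd]
  have hlen : l.length = n := List.length_replicate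
  have hcont : ContinuousOn (psi l) (Icc (1/4 : ℝ) (3/4)) := by
    apply ContinuousOn.div
    · exact Continuous.continuousOn (by continuity)
    · exact Continuous.continuousOn (by continuity)
    · intro t ht
      exact ne_of_gt (den_pos l h1s (by linarith [ht.1] : (0:ℝ) ≤ t))
  have hivt : uIcc (psi l (1/4)) (psi l (3/4)) ⊆ psi l '' (Icc (1/4 : ℝ) (3/4)) := by
    have h := intermediate_value_uIcc (f := psi l) (a := (1/4:ℝ)) (b := (3/4:ℝ)) ?_
    · rwa [Set.uIcc_of_le (by norm_num : (1/4:ℝ) ≤ 3/4)] at h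
    · rwa [Set.uIcc_of_le (by norm_num : (1/4:ℝ) ≤ 3/4)]
  have hsub : Ioo (min (psi l (1/4)) (psi l (3/4))) (max (psi l (1/4)) (psi l (3/4))) ⊆
      {x : ℝ | x ∈ Ioc (0:ℝ) 1 ∧ ecfB n x = 1} := by
    intro y hy
    have hy' : y ∈ uIcc (psi l (1/4)) (psi l (3/4)) := by
      rw [Set.uIcc]
      exact Ioo_subset_Icc_self hy
    obtain ⟨t, htmem, hteq⟩ := hivt hy'
    have htIoo : t ∈ Ioo (0:ℝ) 1 := ⟨by linarith [htmem.1], by linarith [htmem.2]⟩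
    obtain ⟨hmem, hdig⟩ := ones_forward n htIoo
    rw [hteq] at hmem hdig
    refine ⟨⟨hmem.1, le_of_lt hmem.2⟩, ?_⟩
    have := hdig ⟨n - 1, by omega⟩
    simpa [show (n - 1) + 1 = n by omega] using this
  have hvol : volume (Ioo (min (psi l (1/4)) (psi l (3/4)))
      (max (psi l (1/4)) (psi l (3/4)))) = ENNReal.ofReal |psi l (1/4) - psi l (3/4)| := by
    rw [Real.volume_Ioo, max_sub_min_eq_abs, abs_sub_comm]
  have hlb : (2 * phi ^ 2)⁻¹ * (phi ^ (2 * n))⁻¹ ≤ |psi l (1/4) - psi l (3/4)| := by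
    have hdiff := psi_diff l h1s (by norm_num : (0:ℝ) ≤ 1/4) (by norm_num : (0:ℝ) ≤ 3/4)
    have hprod : (l.prod : ℝ) = 1 := by rw [hl, List.prod_replicate, one_pow]; norm_num
    obtain ⟨hA, hB, hC, hD, -⟩ := mat_pos l h1s
    have hC' : (0:ℝ) ≤ (mat l 1 0 : ℝ) := by exact_mod_cast hC
    have hD' : (1:ℝ) ≤ (mat l 1 1 : ℝ) := by exact_mod_cast hD
    have hCD := (ones_upper n).2
    rw [← hl] at hCD
    have hphin : (0:ℝ) < phi ^ (n + 1) := pow_pos phi_pos _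
    have hden1 : 0 < (mat l 1 0 : ℝ) * (1/4) + (mat l 1 1 : ℝ) := by nlinarith
    have hden2 : 0 < (mat l 1 0 : ℝ) * (3/4) + (mat l 1 1 : ℝ) := by nlinarith
    have hub1 : (mat l 1 0 : ℝ) * (1/4) + (mat l 1 1 : ℝ) ≤ phi ^ (n + 1) := by nlinarith
    have hub2 : (mat l 1 0 : ℝ) * (3/4) + (mat l 1 1 : ℝ) ≤ phi ^ (n + 1) := by nlinarith
    have habs : |psi l (1/4) - psi l (3/4)|
        = (1/2) / (((mat l 1 0 : ℝ) * (1/4) + (mat l 1 1 : ℝ))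
          * ((mat l 1 0 : ℝ) * (3/4) + (mat l 1 1 : ℝ))) := by
      rw [hdiff, hprod, abs_div, abs_of_pos (mul_pos hden1 hden2)]
      congr 1
      rw [abs_mul, abs_mul, abs_pow, abs_neg, abs_one, one_pow]
      norm_num
    have hEq : phi ^ (n+1) * phi ^ (n+1) = phi ^ (2*n) * phi ^ 2 := by
      rw [← pow_add, ← pow_add]; congr 1; omega
    have hrw : (2 * phi ^ 2)⁻¹ * (phi ^ (2*n))⁻¹ = (1/2) / (phi ^ (2*n) * phi ^ 2) := by
      have hp2 : phi ^ 2 ≠ 0 := ne_of_gt (pow_pos phi_pos 2)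
      have hpn : phi ^ (2*n) ≠ 0 := ne_of_gt (pow_pos phi_pos _)
      field_simp
    rw [habs, hrw]
    gcongr (1/2) / ?_
    · calc ((mat l 1 0 : ℝ) * (1/4) + (mat l 1 1 : ℝ))
          * ((mat l 1 0 : ℝ) * (3/4) + (mat l 1 1 : ℝ))
          ≤ phi ^ (n+1) * phi ^ (n+1) := by nlinarith
        _ = phi ^ (2*n) * phi ^ 2 := hEq
  calc ENNReal.ofReal ((2 * phi ^ 2)⁻¹ * (phi ^ (2 * n))⁻¹)
      ≤ ENNReal.ofReal |psi l (1/4) - psi l (3/4)| := ENNReal.ofReal_le_ofReal hlb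
    _ = _ := hvol.symm
    _ ≤ volume {x : ℝ | x ∈ Ioc (0:ℝ) 1 ∧ ecfB n x = 1} := measure_mono hsub

lemma cover_one {n : ℕ} (hn : 1 ≤ n) :
    {x : ℝ | ecfB n x = 1} ∩ Ioc (0:ℝ) 1 ⊆
      {x : ℝ | x ∈ Ioc (0:ℝ) 1 ∧ ∃ k < n, ecfT^[k] x = 0} ∪
        cylSet (List.replicate n 1) := by
  rintro x ⟨hBn, hx⟩
  by_cases hgood : ∀ k < n, ecfT^[k] x ≠ 0
  · right
    refine ⟨hx, ?_⟩
    intro i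
    have hi : (i : ℕ) < n := by
      have := i.2; simpa [List.length_replicate] using this
    have hpos := good_digit_pos hx hgood i hi
    have hle : ecfB ((i:ℕ) + 1) x ≤ ecfB ((n - 1) + 1) x :=
      good_digit_mono' hx hgood i (n-1) (by omega) (by omega)
    rw [show (n - 1) + 1 = n by omega] at hle
    rw [hBn] at hle
    have h11 : ecfB ((i:ℕ) + 1) x = 1 := le_antisymm hle hpos
    simp [h11]
  · left
    push_neg at hgood
    obtain ⟨k, hk, h0⟩ := hgood
    exact ⟨hx, k, hk, h0⟩

def idxSet (n j : ℕ) : Finset (Fin n → ℕ) :=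
  Finset.filter (fun c => Monotone c) (Fintype.piFinset fun _ => Finset.Icc 1 j)

lemma cover_le {n : ℕ} (hn : 1 ≤ n) (j : ℕ) :
    {x : ℝ | ecfB n x ≤ (j:ℤ)} ∩ Ioc (0:ℝ) 1 ⊆
      {x : ℝ | x ∈ Ioc (0:ℝ) 1 ∧ ∃ k < n, ecfT^[k] x = 0} ∪
        ⋃ c ∈ idxSet n j, cylSet (List.ofFn c) := by
  rintro x ⟨hBn, hx⟩
  by_cases hgood : ∀ k < n, ecfT^[k] x ≠ 0
  · right
    set c : Fin n → ℕ := fun i => (ecfB ((i:ℕ) + 1) x).toNat with hc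
    have hpos : ∀ i : Fin n, 1 ≤ ecfB ((i:ℕ) + 1) x :=
      fun i => good_digit_pos hx hgood i i.2
    have hlast : ∀ i : Fin n, ecfB ((i:ℕ) + 1) x ≤ (j:ℤ) := by
      intro i
      have hle : ecfB ((i:ℕ) + 1) x ≤ ecfB ((n - 1) + 1) x :=
        good_digit_mono' hx hgood i (n-1) (by omega) (by omega)
      rw [show (n - 1) + 1 = n by omega] at hle
      exact le_trans hle hBn
    have hmono : Monotone c := by
      intro i i' hii'
      have hmm := good_digit_mono' hx hgood ((i:ℕ)) ((i':ℕ)) (by exact_mod_cast hii') i'.2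
      show (ecfB ((i:ℕ) + 1) x).toNat ≤ (ecfB ((i':ℕ) + 1) x).toNat
      omega
    have hmem : c ∈ idxSet n j := by
      rw [idxSet, Finset.mem_filter]
      refine ⟨Fintype.mem_piFinset.2 fun i => ?_, hmono⟩
      rw [Finset.mem_Icc]
      have h1 := hpos i
      have h2 := hlast i
      show 1 ≤ (ecfB ((i:ℕ) + 1) x).toNat ∧ (ecfB ((i:ℕ) + 1) x).toNat ≤ j
      omega
    apply Set.mem_biUnion hmem
    refine ⟨hx, ?_⟩
    intro i
    have hlen : (List.ofFn c).length = n := List.length_ofFn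
    rw [List.get_ofFn]
    have h1 := hpos (Fin.cast hlen i)
    have hcast : (c (Fin.cast hlen i) : ℤ) = ecfB ((i:ℕ) + 1) x := by
      show ((ecfB (((Fin.cast hlen i):ℕ) + 1) x).toNat : ℤ) = _
      rw [Int.toNat_of_nonneg (by omega)]
      rfl
    rw [hcast]
  · left
    push_neg at hgood
    obtain ⟨k, hk, h0⟩ := hgood
    exact ⟨hx, k, hk, h0⟩

lemma count_le {n j : ℕ} (hn : 1 ≤ n) (hj : 1 ≤ j) :
    (idxSet n j).card ≤ (n + j - 1).choose n := by
  classical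
  have h := Finset.card_le_card_of_injOn
    (f := fun c : Fin n → ℕ => Finset.image (fun i : Fin n => c i + (i:ℕ)) Finset.univ)
    (s := idxSet n j) (t := Finset.powersetCard n (Finset.Icc 1 (n + j - 1))) ?_ ?_
  · calc (idxSet n j).card ≤ _ := h
      _ = (n + j - 1).choose n := by
        rw [Finset.card_powersetCard, Nat.card_Icc]
        simp
  · intro c hcmem
    rw [Finset.mem_coe, idxSet, Finset.mem_filter] at hcmem
    obtain ⟨hpi, hmono⟩ := hcmem
    have hbd : ∀ i : Fin n, 1 ≤ c i ∧ c i ≤ j := by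
      intro i
      have := Fintype.mem_piFinset.1 hpi i
      rwa [Finset.mem_Icc] at this
    rw [Finset.mem_coe, Finset.mem_powersetCard]
    constructor
    · intro a ha
      rw [Finset.mem_image] at ha
      obtain ⟨i, -, rfl⟩ := ha
      rw [Finset.mem_Icc]
      have := hbd i
      have := i.2
      omega
    · have hsm : StrictMono (fun i : Fin n => c i + (i:ℕ)) := by
        intro i i' hii'
        have h1 : c i ≤ c i' := hmono (le_of_lt hii')
        have h2 : (i:ℕ) < (i':ℕ) := hii'
        show c i + (i:ℕ) < c i' + (i':ℕ)
        omega
      rw [Finset.card_image_of_injective _ hsm.injective, Finset.card_univ, Fintype.card_fin]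
  · intro c hcmem c' hcmem' heq
    have hm : Monotone c := by
      have h := hcmem
      rw [Finset.mem_coe, idxSet, Finset.mem_filter] at h
      exact h.2
    have hm' : Monotone c' := by
      have h := hcmem'
      rw [Finset.mem_coe, idxSet, Finset.mem_filter] at h
      exact h.2
    have hsm : StrictMono (fun i : Fin n => c i + (i:ℕ)) := by
      intro i i' hii'
      have h1 : c i ≤ c i' := hm (le_of_lt hii')
      have h2 : (i:ℕ) < (i':ℕ) := hii'
      show c i + (i:ℕ) < c i' + (i':ℕ)
      omega
    have hsm' : StrictMono (fun i : Fin n => c' i + (i:ℕ)) := by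
      intro i i' hii'
      have h1 : c' i ≤ c' i' := hm' (le_of_lt hii')
      have h2 : (i:ℕ) < (i':ℕ) := hii'
      show c' i + (i:ℕ) < c' i' + (i':ℕ)
      omega
    have heq' : Finset.image (fun i : Fin n => c i + (i:ℕ)) Finset.univ
        = Finset.image (fun i : Fin n => c' i + (i:ℕ)) Finset.univ := heq
    have hcard : (Finset.image (fun i : Fin n => c i + (i:ℕ)) Finset.univ).card = n := by
      rw [Finset.card_image_of_injective _ hsm.injective, Finset.card_univ, Fintype.card_fin]
    have h1 : (fun i : Fin n => c i + (i:ℕ))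
        = (Finset.image (fun i : Fin n => c i + (i:ℕ)) Finset.univ).orderEmbOfFin hcard :=
      Finset.orderEmbOfFin_unique hcard
        (fun i => Finset.mem_image_of_mem _ (Finset.mem_univ i)) hsm
    have h2 : (fun i : Fin n => c' i + (i:ℕ))
        = (Finset.image (fun i : Fin n => c i + (i:ℕ)) Finset.univ).orderEmbOfFin hcard := by
      apply Finset.orderEmbOfFin_unique hcard _ hsm'
      intro i
      have hmem2 : c' i + (i:ℕ) ∈ Finset.image (fun i : Fin n => c' i + (i:ℕ)) Finset.univ :=
        Finset.mem_image_of_mem _ (Finset.mem_univ i)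
      exact heq'.symm ▸ hmem2
    funext i
    have h3 := congrFun h1 i
    have h4 := congrFun h2 i
    rw [← h4] at h3
    simpa using h3

end ECFAux

open ECFAux in
/-- There is a constant `A > 1` such that `A⁻¹ φ^{-2n} ≤ P(b_n = 1) ≤ A φ^{-2n}` and, for
every integer `j > 1`, `P(b_n ≤ j) ≤ A · C(n+j-1, j-1) · φ^{-2n}`, where `φ = (√5+1)/2`. -/
theorem ecf_small_digit_measure :
    ∃ A : ℝ, 1 < A ∧ ∀ n : ℕ, 1 ≤ n →
      (ENNReal.ofReal (A⁻¹ * (((Real.sqrt 5 + 1) / 2) ^ (2 * n))⁻¹) ≤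
          ecfP {x | ecfB n x = 1} ∧
        ecfP {x | ecfB n x = 1} ≤
          ENNReal.ofReal (A * (((Real.sqrt 5 + 1) / 2) ^ (2 * n))⁻¹)) ∧
      ∀ j : ℕ, 1 < j →
        ecfP {x | ecfB n x ≤ (j : ℤ)} ≤
          ENNReal.ofReal (A * (Nat.choose (n + j - 1) (j - 1) : ℝ) *
            (((Real.sqrt 5 + 1) / 2) ^ (2 * n))⁻¹) := by
  refine ⟨6, by norm_num, ?_⟩
  intro n hn
  have hphi : ((Real.sqrt 5 + 1) / 2) = ECFAux.phi := rfl
  have h2phi2 : 2 * ECFAux.phi ^ 2 ≤ 6 := by nlinarith [phi_sq, phi_lt_two, phi_pos]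
  have h2phi2pos : (0:ℝ) < 2 * ECFAux.phi ^ 2 := by nlinarith [phi_pos]
  have hpowpos : (0:ℝ) < (ECFAux.phi ^ (2 * n))⁻¹ :=
    inv_pos.2 (pow_pos phi_pos _)
  have hrepne : List.replicate n 1 ≠ ([] : List ℕ) := by
    intro h
    have := congrArg List.length h
    simp at this
    omega
  have hrep1 : ∀ c ∈ List.replicate n 1, 1 ≤ c :=
    fun c hc => by rw [List.eq_of_mem_replicate hc]
  refine ⟨⟨?_, ?_⟩, ?_⟩
  · -- lower bound
    rw [ecfP, Measure.restrict_apply' measurableSet_Ioc]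
    have hset : {x : ℝ | x ∈ Ioc (0:ℝ) 1 ∧ ecfB n x = 1}
        = {x : ℝ | ecfB n x = 1} ∩ Ioc 0 1 := by
      ext x; exact ⟨fun ⟨a, b⟩ => ⟨b, a⟩, fun ⟨a, b⟩ => ⟨b, a⟩⟩
    have hlow := ones_lower n hn
    rw [hset] at hlow
    refine le_trans ?_ hlow
    apply ENNReal.ofReal_le_ofReal
    rw [hphi]
    apply mul_le_mul_of_nonneg_right _ (le_of_lt hpowpos)
    exact inv_anti₀ h2phi2pos h2phi2
  · -- upper bound, b_n = 1
    rw [ecfP, Measure.restrict_apply' measurableSet_Ioc]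
    have hcyl := cyl_measure (List.replicate n 1) hrepne hrep1
    simp only [List.length_replicate] at hcyl
    calc volume ({x : ℝ | ecfB n x = 1} ∩ Ioc 0 1)
        ≤ volume ({x : ℝ | x ∈ Ioc (0:ℝ) 1 ∧ ∃ k < n, ecfT^[k] x = 0}
            ∪ cylSet (List.replicate n 1)) := measure_mono (cover_one hn)
      _ ≤ volume {x : ℝ | x ∈ Ioc (0:ℝ) 1 ∧ ∃ k < n, ecfT^[k] x = 0}
            + volume (cylSet (List.replicate n 1)) := measure_union_le _ _
      _ ≤ 0 + ENNReal.ofReal (2 * (ECFAux.phi ^ 2 * (ECFAux.phi ^ (2 * n))⁻¹)) :=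
            add_le_add (le_of_eq (bad_null n)) hcyl
      _ ≤ ENNReal.ofReal (6 * (((Real.sqrt 5 + 1) / 2) ^ (2 * n))⁻¹) := by
            rw [zero_add, hphi]
            apply ENNReal.ofReal_le_ofReal
            nlinarith [hpowpos]
  · -- upper bound, b_n ≤ j
    intro j hj
    rw [ecfP, Measure.restrict_apply' measurableSet_Ioc]
    have hchoose : (n + j - 1).choose n = (n + j - 1).choose (j - 1) := by
      rw [← Nat.choose_symm (by omega : n ≤ n + j - 1)]
      congr 1
      omega
    have hcount := count_le hn (by omega : 1 ≤ j)
    have hcylbd : ∀ c ∈ idxSet n j, volume (cylSet (List.ofFn c)) ≤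
        ENNReal.ofReal (2 * (ECFAux.phi ^ 2 * (ECFAux.phi ^ (2 * n))⁻¹)) := by
      intro c hc
      have hone : ∀ d ∈ List.ofFn c, 1 ≤ d := by
        intro d hd
        rw [List.mem_ofFn] at hd
        obtain ⟨i, rfl⟩ := hd
        have := Fintype.mem_piFinset.1 (Finset.mem_filter.1 hc).1 i
        exact (Finset.mem_Icc.1 this).1
      have hnen : List.ofFn c ≠ [] := by
        intro h
        have := congrArg List.length h
        simp at this
        omega
      have := cyl_measure (List.ofFn c) hnen hone
      simpa [List.length_ofFn] using this
    calc volume ({x : ℝ | ecfB n x ≤ (j:ℤ)} ∩ Ioc 0 1)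
        ≤ volume ({x : ℝ | x ∈ Ioc (0:ℝ) 1 ∧ ∃ k < n, ecfT^[k] x = 0}
            ∪ ⋃ c ∈ idxSet n j, cylSet (List.ofFn c)) := measure_mono (cover_le hn j)
      _ ≤ volume {x : ℝ | x ∈ Ioc (0:ℝ) 1 ∧ ∃ k < n, ecfT^[k] x = 0}
            + volume (⋃ c ∈ idxSet n j, cylSet (List.ofFn c)) := measure_union_le _ _
      _ ≤ 0 + ∑ c ∈ idxSet n j, volume (cylSet (List.ofFn c)) :=
            add_le_add (le_of_eq (bad_null n)) (measure_biUnion_finset_le _ _)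
      _ ≤ ∑ c ∈ idxSet n j,
            ENNReal.ofReal (2 * (ECFAux.phi ^ 2 * (ECFAux.phi ^ (2 * n))⁻¹)) := by
            rw [zero_add]
            exact Finset.sum_le_sum hcylbd
      _ = (idxSet n j).card *
            ENNReal.ofReal (2 * (ECFAux.phi ^ 2 * (ECFAux.phi ^ (2 * n))⁻¹)) := by
            rw [Finset.sum_const, nsmul_eq_mul]
      _ ≤ ((n + j - 1).choose n : ENNReal) *
            ENNReal.ofReal (2 * (ECFAux.phi ^ 2 * (ECFAux.phi ^ (2 * n))⁻¹)) := by
            apply mul_le_mul_left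
            exact_mod_cast hcount
      _ ≤ ENNReal.ofReal (6 * ((n + j - 1).choose (j - 1) : ℝ) *
            (((Real.sqrt 5 + 1) / 2) ^ (2 * n))⁻¹) := by
            rw [← ENNReal.ofReal_natCast, ← ENNReal.ofReal_mul (by positivity), hphi,
              ← hchoose]
            apply ENNReal.ofReal_le_ofReal
            have hch0 : (0:ℝ) ≤ ((n + j - 1).choose n : ℝ) := by positivity
            nlinarith [hpowpos, mul_le_mul_of_nonneg_left h2phi2 hch0,
              mul_le_mul_of_nonneg_right
                (mul_le_mul_of_nonneg_left h2phi2 hch0) (le_of_lt hpowpos)]
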